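/- Let ℓ be an odd prime and b a positive integer. The image of the function g_{ℓ^b} : 𝕋^{φ(ℓ^b)} → ℂ, defined by g_{ℓ^b}(z_1,…,z_{φ(ℓ^b)}) = Σ_{k=1}^{ℓ^b} Π_{j=1}^{φ(ℓ^b)} z_j^{c_{j,k}} where x^k ≡ Σ_{j=1}^{φ(ℓ^b)} c_{j,k} x^{j−1} (mod Φ_{ℓ^b}(x)), equals the ℓ^{b−1}-fold Minkowski sum H_ℓ^{⊕ℓ^{b−1}} of the set H_ℓ with itself. -/

import Mathlib

open Finset Pointwise

/-- `e(θ) = exp(2πiθ)`. -/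
noncomputable def e2 (θ : ℝ) : ℂ := Complex.exp (2 * Real.pi * Complex.I * θ)

/-- The cyclic supercharacter `σ_ω : ℤ/nℤ → ℂ` attached to a unit `ω` mod `n`:
`σ_ω(y) = ∑_{j=1}^{d} e(ω^j y / n)` where `d` is the multiplicative order of `ω`. -/
noncomputable def cyclicSuperchar (n : ℕ) (ω : (ZMod n)ˣ) (y : ZMod n) : ℂ :=
  ∑ j ∈ Finset.Icc 1 (orderOf ω),
    e2 (((((ω ^ j : (ZMod n)ˣ) : ZMod n) * y).val : ℝ) / (n : ℝ))

/-- `H m`: the set of traces of matrices in `SU_m(ℂ)` (the filled `m`-cusped hypocycloid). -/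
noncomputable def H (m : ℕ) : Set ℂ :=
  Set.range fun M : Matrix.specialUnitaryGroup (Fin m) ℂ =>
    Matrix.trace (M : Matrix (Fin m) (Fin m) ℂ)

/-- `P m`: the convex hull of `H m` (the filled regular `m`-gon). -/
noncomputable def Pset (m : ℕ) : Set ℂ := convexHull ℝ (H m)

/-- `c_{j,k}` : the coefficient of `x^j` in the remainder of `x^k` mod `Φ_d(x)`. -/
noncomputable def cExp (d j k : ℕ) : ℤ :=
  (((Polynomial.X : Polynomial ℤ) ^ k) %ₘ Polynomial.cyclotomic d ℤ).coeff j

/-- The Laurent-polynomial map `g_d(z_1,…,z_{φ(d)}) = ∑_{k=1}^d ∏_j z_j^{c_{j,k}}`. -/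
noncomputable def gphi (d : ℕ) (z : Fin (Nat.totient d) → ℂ) : ℂ :=
  ∑ k ∈ Finset.Icc 1 d, ∏ j : Fin (Nat.totient d), z j ^ (cExp d (j : ℕ) k)

/-- The image of `g_d` restricted to the torus `𝕋^{φ(d)}`. -/
noncomputable def gImage (d : ℕ) : Set ℂ :=
  {w : ℂ | ∃ z : Fin (Nat.totient d) → ℂ, (∀ j, ‖z j‖ = 1) ∧ gphi d z = w}

/-- The `k`-fold Minkowski sum `A^{⊕k}` of a subset of `ℂ` with itself. -/
def minkSumPow (A : Set ℂ) (k : ℕ) : Set ℂ :=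
  {z : ℂ | ∃ f : Fin k → ℂ, (∀ i, f i ∈ A) ∧ ∑ i, f i = z}

/-- Scaling a subset of `ℂ` by a real number. -/
def scale (r : ℝ) (A : Set ℂ) : Set ℂ := (fun z => (r : ℂ) * z) '' A

/-- The sets `A k` fill out `B` as `k → ∞`. -/
def FillsOut (A : ℕ → Set ℂ) (B : Set ℂ) : Prop :=
  (∀ k, A k ⊆ B) ∧
    ∀ U : Set ℂ, IsOpen U → U.Nonempty → U ⊆ B → ∃ K : ℕ, ∀ k > K, (U ∩ A k).Nonempty

/-- A subset of `ℂ` has `k`-fold dihedral symmetry if it is stable under complex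
conjugation and under rotation by `2π/k` about the origin. -/
def HasDihedralSymm (k : ℕ) (A : Set ℂ) : Prop :=
  (∀ z ∈ A, (starRingEnd ℂ) z ∈ A) ∧ ∀ z ∈ A, e2 (1 / k) * z ∈ A

/-- The `k`-fold dihedral closure of a subset of `ℂ`. -/
def dihedralClosure (k : ℕ) (A : Set ℂ) : Set ℂ :=
  ⋂₀ {B : Set ℂ | A ⊆ B ∧ HasDihedralSymm k B}

/-- The Gauss sum `g_k(t) = ∑_{j=1}^{p} e(t j^k / p)` of order `k` mod `p`. -/
noncomputable def gaussG (p k : ℕ) (t : ZMod p) : ℂ :=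
  ∑ j ∈ Finset.Icc 1 p, e2 ((((t * (j : ZMod p) ^ k).val : ℕ) : ℝ) / (p : ℝ))

/-- The Gauss sum `G(t,χ) = ∑_{j=1}^{p-1} χ(j) e(tj/p)` attached to a character `χ` mod `p`. -/
noncomputable def GSum (p : ℕ) (χ : DirichletCharacter ℂ p) (t : ZMod p) : ℂ :=
  ∑ j ∈ Finset.Icc 1 (p - 1), χ (j : ZMod p) * e2 ((((t * (j : ZMod p)).val : ℕ) : ℝ) / (p : ℝ))


/-! ### Auxiliary lemmas -/
open Polynomial Matrix

noncomputable def zfun {φ : ℕ} (z : Fin φ → ℂ) (m : ℕ) : ℂ :=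
  if h : m < φ then z ⟨m, h⟩ else 1

lemma unit_root_norm {m : ℕ} (M : Matrix (Fin m) (Fin m) ℂ)
    (hM : M ∈ Matrix.unitaryGroup (Fin m) ℂ) {lam : ℂ}
    (h : M.charpoly.IsRoot lam) : ‖lam‖ = 1 := by
  have hdet : (Matrix.scalar (Fin m) lam - M).det = 0 := by
    have := eval_det (Matrix.charmatrix M) lam
    rw [← Matrix.charpoly, h.eq_zero, Matrix.matPolyEquiv_charmatrix] at this
    simp only [Polynomial.eval_sub, Polynomial.eval_X, Polynomial.eval_C] at this
    exact this.symm
  obtain ⟨v, hv, hveq⟩ := (Matrix.exists_mulVec_eq_zero_iff).2 hdet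
  have heig : M.mulVec v = lam • v := by
    rw [Matrix.sub_mulVec] at hveq
    have h2 : (Matrix.scalar (Fin m) lam).mulVec v = lam • v := by
      funext i
      simp [Matrix.scalar, Matrix.mulVec_diagonal]
    rw [h2, sub_eq_zero] at hveq
    exact hveq.symm
  have hMHM : Mᴴ * M = 1 := by
    have := Matrix.mem_unitaryGroup_iff'.1 hM
    rwa [Matrix.star_eq_conjTranspose] at this
  have key : star (M.mulVec v) ⬝ᵥ (M.mulVec v) = star v ⬝ᵥ v := by
    rw [Matrix.star_mulVec, Matrix.dotProduct_mulVec, Matrix.vecMul_vecMul, hMHM,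
      Matrix.vecMul_one]
  rw [heig] at key
  have hsv : star (lam • v) = (starRingEnd ℂ lam) • star v := by
    funext i; simp [Pi.smul_apply, mul_comm]
  rw [hsv, smul_dotProduct, dotProduct_smul] at key
  have hc : star v ⬝ᵥ v = ((∑ i, Complex.normSq (v i) : ℝ) : ℂ) := by
    simp only [dotProduct, Pi.star_apply, Complex.ofReal_sum]
    congr 1; funext i
    rw [RCLike.star_def, Complex.normSq_eq_conj_mul_self]
  have hcne : star v ⬝ᵥ v ≠ 0 := by
    rw [hc]
    norm_cast
    intro h0
    apply hv
    funext i
    have hnn : ∀ i, 0 ≤ Complex.normSq (v i) := fun i => Complex.normSq_nonneg _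
    have := (Finset.sum_eq_zero_iff_of_nonneg (fun i _ => hnn i)).1 h0 i (Finset.mem_univ i)
    exact Complex.normSq_eq_zero.1 this
  have hmul : (starRingEnd ℂ lam) * lam = 1 := by
    rw [smul_smul] at key
    have := mul_right_cancel₀ hcne (key.trans (one_mul _).symm)
    exact this
  have hns : Complex.normSq lam = 1 := by
    have h2 : ((Complex.normSq lam : ℝ) : ℂ) = 1 := by
      rw [Complex.normSq_eq_conj_mul_self, hmul]
    exact_mod_cast h2
  rw [← Complex.sq_norm] at hns
  nlinarith [norm_nonneg lam]

lemma mem_H_iff {m : ℕ} (w : ℂ) :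
    w ∈ H m ↔ ∃ g : Fin m → ℂ, (∀ i, ‖g i‖ = 1) ∧ ∏ i, g i = 1 ∧ ∑ i, g i = w := by
  constructor
  · rintro ⟨M, rfl⟩
    obtain ⟨hMu, hMdet⟩ := Matrix.mem_specialUnitaryGroup_iff.1 M.2
    set A : Matrix (Fin m) (Fin m) ℂ := (M : Matrix (Fin m) (Fin m) ℂ)
    have hsplit : A.charpoly.Splits := IsAlgClosed.splits _
    have hcard : Multiset.card A.charpoly.roots = m := by
      rw [(Polynomial.splits_iff_card_roots).1 hsplit, Matrix.charpoly_natDegree_eq_dim]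
      simp
    have htr : A.trace = A.charpoly.roots.sum :=
      Matrix.trace_eq_sum_roots_charpoly_of_splits hsplit
    have hdet : A.det = A.charpoly.roots.prod :=
      Matrix.det_eq_prod_roots_charpoly_of_splits hsplit
    set L := A.charpoly.roots.toList with hL
    have hlen : L.length = m := by rw [hL, Multiset.length_toList, hcard]
    refine ⟨fun i => L.get (Fin.cast hlen.symm i), fun i => ?_, ?_, ?_⟩
    · apply unit_root_norm A hMu
      have hmem : L.get (Fin.cast hlen.symm i) ∈ A.charpoly.roots := by
        rw [← Multiset.mem_toList]
        exact List.get_mem L (Fin.cast hlen.symm i)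
      exact (Polynomial.mem_roots (Matrix.charpoly_monic A).ne_zero).1 hmem
    · have h0 : ∏ i : Fin L.length, L.get i = L.prod := by
        conv_rhs => rw [← List.ofFn_get L]
        rw [List.prod_ofFn]
      have h1 : ∏ i : Fin m, L.get (Fin.cast hlen.symm i) = ∏ i : Fin L.length, L.get i :=
        Fintype.prod_equiv (finCongr hlen.symm) _ _ (fun i => rfl)
      rw [h1, h0]
      have : L.prod = A.charpoly.roots.prod := by rw [hL, Multiset.prod_toList]
      rw [this, ← hdet, hMdet]
    · have h0 : ∑ i : Fin L.length, L.get i = L.sum := by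
        conv_rhs => rw [← List.ofFn_get L]
        rw [List.sum_ofFn]
      have h1 : ∑ i : Fin m, L.get (Fin.cast hlen.symm i) = ∑ i : Fin L.length, L.get i :=
        Fintype.sum_equiv (finCongr hlen.symm) _ _ (fun i => rfl)
      rw [h1, h0]
      have : L.sum = A.charpoly.roots.sum := by rw [hL, Multiset.sum_toList]
      rw [this, ← htr]
  · rintro ⟨g, hg, hgp, rfl⟩
    have hmem : Matrix.diagonal g ∈ Matrix.specialUnitaryGroup (Fin m) ℂ := by
      rw [Matrix.mem_specialUnitaryGroup_iff]
      constructor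
      · rw [Matrix.mem_unitaryGroup_iff, Matrix.star_eq_conjTranspose,
          Matrix.diagonal_conjTranspose, Matrix.diagonal_mul_diagonal]
        have hone : (fun i => g i * star g i) = fun _ : Fin m => (1:ℂ) := by
          funext i
          have h3 : star g i = (starRingEnd ℂ) (g i) := rfl
          rw [h3, Complex.mul_conj', hg]
          norm_num
        rw [hone, Matrix.diagonal_one]
      · rw [Matrix.det_diagonal, hgp]
    exact ⟨⟨Matrix.diagonal g, hmem⟩,
      by show (Matrix.diagonal g).trace = _; rw [Matrix.trace_diagonal]⟩

lemma norm_one_prod_ne_zero {k : ℕ} {f : Fin k → ℂ} (hf : ∀ i, ‖f i‖ = 1) :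
    ∏ i, f i ≠ 0 := by
  apply Finset.prod_ne_zero_iff.2
  intro i _
  intro h0
  have := hf i
  rw [h0] at this
  simp at this

lemma mem_H_char {ℓ : ℕ} (hℓ2 : 2 ≤ ℓ) (w : ℂ) :
    w ∈ H ℓ ↔ ∃ f : Fin (ℓ-1) → ℂ, (∀ i, ‖f i‖ = 1) ∧
      ∑ i, f i + (∏ i, f i)⁻¹ = w := by
  obtain ⟨m, rfl⟩ : ∃ m, ℓ = m + 1 := ⟨ℓ-1, by omega⟩
  rw [mem_H_iff]
  constructor
  · rintro ⟨g, hg, hgp, rfl⟩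
    refine ⟨fun i => g i.castSucc, fun i => hg _, ?_⟩
    rw [Fin.prod_univ_castSucc] at hgp
    have hlast : g (Fin.last m) = (∏ i : Fin m, g i.castSucc)⁻¹ :=
      eq_inv_of_mul_eq_one_left (by rw [mul_comm]; exact hgp)
    show ∑ i : Fin m, g i.castSucc + (∏ i : Fin m, g i.castSucc)⁻¹ = ∑ i : Fin (m+1), g i
    rw [Fin.sum_univ_castSucc, hlast]
  · rintro ⟨f, hf, rfl⟩
    refine ⟨Fin.snoc f (∏ i, f i)⁻¹, fun i => ?_, ?_, ?_⟩
    · refine Fin.lastCases ?_ ?_ i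
      · rw [Fin.snoc_last, norm_inv, norm_prod]
        rw [Finset.prod_congr rfl (fun i _ => hf i)]
        simp
      · intro j
        rw [Fin.snoc_castSucc]
        exact hf j
    · rw [Fin.prod_univ_castSucc]
      simp only [Fin.snoc_castSucc, Fin.snoc_last]
      exact mul_inv_cancel₀ (norm_one_prod_ne_zero hf)
    · rw [Fin.sum_univ_castSucc]
      simp only [Fin.snoc_castSucc, Fin.snoc_last]
      rfl

section
open Polynomial
variable {ℓ : ℕ} (n : ℕ)

lemma deg_cyc (hℓ : ℓ.Prime) : (Polynomial.cyclotomic (ℓ^(n+1)) ℤ).degree = ((ℓ^n * (ℓ-1) : ℕ) : WithBot ℕ) := by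
  rw [degree_eq_natDegree (cyclotomic_ne_zero _ ℤ), natDegree_cyclotomic,
    Nat.totient_prime_pow hℓ (Nat.succ_pos n)]
  simp

lemma rem1 (hℓ : ℓ.Prime) {k : ℕ} (hk : k < ℓ^n * (ℓ-1)) :
    ((X : Polynomial ℤ) ^ k) %ₘ cyclotomic (ℓ^(n+1)) ℤ = X ^ k := by
  rw [modByMonic_eq_self_iff (cyclotomic.monic _ ℤ), deg_cyc n hℓ, degree_X_pow]
  exact_mod_cast hk

lemma rem2 (hℓ : ℓ.Prime) {r : ℕ} (hr : r < ℓ^n) :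
    ((X : Polynomial ℤ) ^ (ℓ^n * (ℓ-1) + r)) %ₘ cyclotomic (ℓ^(n+1)) ℤ =
      -(∑ i ∈ Finset.range (ℓ-1), X ^ (ℓ^n * i + r)) := by
  have hm := cyclotomic.monic (ℓ^(n+1)) ℤ
  have h2 := hℓ.two_le
  have hdvd : cyclotomic (ℓ^(n+1)) ℤ ∣
      (X : Polynomial ℤ) ^ (ℓ^n * (ℓ-1) + r) - -(∑ i ∈ Finset.range (ℓ-1), X ^ (ℓ^n * i + r)) := by
    rw [sub_neg_eq_add, cyclotomic_prime_pow_eq_geom_sum hℓ]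
    refine ⟨X ^ r, ?_⟩
    have h1 : ∀ i : ℕ, ((X : Polynomial ℤ) ^ ℓ^n) ^ i * X ^ r = X ^ (ℓ^n * i + r) := by
      intro i; rw [← pow_mul, ← pow_add]
    rw [Finset.sum_mul]
    have hl1 : Finset.range ℓ = Finset.range ((ℓ-1)+1) := by
      congr 1; omega
    rw [hl1, Finset.sum_range_succ (fun i => ((X:Polynomial ℤ) ^ ℓ^n) ^ i * X ^ r) (ℓ-1)]
    simp only [h1]
    rw [add_comm]
  rw [modByMonic_eq_of_dvd_sub hm hdvd, modByMonic_eq_self_iff hm, deg_cyc n hℓ, degree_neg]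
  apply lt_of_le_of_lt (degree_sum_le _ _)
  rw [Finset.sup_lt_iff (by exact_mod_cast WithBot.bot_lt_coe _)]
  intro i hi
  rw [degree_X_pow]
  have : ℓ^n * i + r < ℓ^n * (ℓ-1) := by
    rcases Finset.mem_range.1 hi with hi'
    have : i + 1 ≤ ℓ - 1 := hi'
    calc ℓ^n * i + r < ℓ^n * i + ℓ^n := by omega
    _ = ℓ^n * (i+1) := by ring
    _ ≤ ℓ^n * (ℓ-1) := Nat.mul_le_mul_left _ this
  exact_mod_cast this

lemma rem3 (hℓ : ℓ.Prime) : ((X : Polynomial ℤ) ^ (ℓ^(n+1))) %ₘ cyclotomic (ℓ^(n+1)) ℤ = 1 := by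
  have hm := cyclotomic.monic (ℓ^(n+1)) ℤ
  have hdvd : cyclotomic (ℓ^(n+1)) ℤ ∣ (X : Polynomial ℤ) ^ (ℓ^(n+1)) - 1 :=
    cyclotomic.dvd_X_pow_sub_one _ _
  rw [modByMonic_eq_of_dvd_sub hm hdvd, modByMonic_eq_self_iff hm, deg_cyc n hℓ, degree_one]
  have h2 := hℓ.two_le
  have hq : 0 < ℓ^n := Nat.pow_pos (by omega)
  have : 0 < ℓ^n * (ℓ-1) := Nat.mul_pos hq (by omega)
  exact_mod_cast this

lemma c1 (hℓ : ℓ.Prime) {k : ℕ} (hk : k < ℓ^n * (ℓ-1)) (j : ℕ) :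
    cExp (ℓ^(n+1)) j k = if j = k then 1 else 0 := by
  rw [cExp, rem1 n hℓ hk, coeff_X_pow]

lemma c2 (hℓ : ℓ.Prime) {r : ℕ} (hr : r < ℓ^n) {j : ℕ} (hj : j < ℓ^n * (ℓ-1)) :
    cExp (ℓ^(n+1)) j (ℓ^n * (ℓ-1) + r) = if j % ℓ^n = r then -1 else 0 := by
  rw [cExp, rem2 n hℓ hr, coeff_neg, finset_sum_coeff]
  simp only [coeff_X_pow]
  by_cases h : j % ℓ^n = r
  · rw [if_pos h]
    have hq : 0 < ℓ^n := Nat.pow_pos hℓ.pos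
    have hdm : ℓ^n * (j / ℓ^n) + r = j := by
      rw [← h]; exact Nat.div_add_mod j (ℓ^n)
    have hi0lt : j / ℓ^n < ℓ - 1 := by
      by_contra hcon
      push_neg at hcon
      have : ℓ^n * (ℓ-1) ≤ ℓ^n * (j / ℓ^n) := Nat.mul_le_mul_left _ hcon
      omega
    rw [Finset.sum_eq_single (j / ℓ^n)]
    · rw [if_pos hdm.symm]
    · intro i hi hne
      rw [if_neg]
      intro hj2
      apply hne
      have h3 : ℓ^n * i = ℓ^n * (j / ℓ^n) := by omega
      exact Nat.eq_of_mul_eq_mul_left hq h3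
    · intro habs
      exact absurd (Finset.mem_range.2 hi0lt) habs
  · rw [if_neg h]
    rw [Finset.sum_eq_zero, neg_zero]
    intro i _
    rw [if_neg]
    intro hji
    apply h
    rw [hji, Nat.mul_add_mod, Nat.mod_eq_of_lt hr]

lemma c3 (hℓ : ℓ.Prime) (j : ℕ) :
    cExp (ℓ^(n+1)) j (ℓ^(n+1)) = if j = 0 then 1 else 0 := by
  rw [cExp, rem3 n hℓ, coeff_one]
end

section
open Polynomial
variable {ℓ : ℕ} (n : ℕ)

lemma totient_eq (hℓ : ℓ.Prime) : (ℓ^(n+1)).totient = ℓ^n * (ℓ-1) := by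
  rw [Nat.totient_prime_pow hℓ (Nat.succ_pos n)]
  simp

lemma term1 (hℓ : ℓ.Prime) (z : Fin ((ℓ^(n+1)).totient) → ℂ) {k : ℕ}
    (hk : k < ℓ^n * (ℓ-1)) :
    ∏ j : Fin ((ℓ^(n+1)).totient), z j ^ (cExp (ℓ^(n+1)) (j : ℕ) k) = zfun z k := by
  have hkφ : k < (ℓ^(n+1)).totient := by rw [totient_eq n hℓ]; exact hk
  have hz : zfun z k = z ⟨k, hkφ⟩ := dif_pos hkφ
  rw [hz]
  rw [Finset.prod_congr rfl (fun j _ => by rw [c1 n hℓ hk])]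
  rw [Finset.prod_eq_single (⟨k, hkφ⟩ : Fin _)]
  · rw [if_pos rfl, zpow_one]
  · intro j _ hne
    rw [if_neg, zpow_zero]
    intro hval
    exact hne (Fin.ext hval)
  · intro h; exact absurd (Finset.mem_univ _) h

lemma term3 (hℓ : ℓ.Prime) (z : Fin ((ℓ^(n+1)).totient) → ℂ) :
    ∏ j : Fin ((ℓ^(n+1)).totient), z j ^ (cExp (ℓ^(n+1)) (j : ℕ) (ℓ^(n+1))) = zfun z 0 := by
  have h2 := hℓ.two_le
  have hkφ : 0 < (ℓ^(n+1)).totient := by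
    rw [totient_eq n hℓ]
    exact Nat.mul_pos (Nat.pow_pos hℓ.pos) (by omega)
  have hz : zfun z 0 = z ⟨0, hkφ⟩ := dif_pos hkφ
  rw [hz]
  rw [Finset.prod_congr rfl (fun j _ => by rw [c3 n hℓ])]
  rw [Finset.prod_eq_single (⟨0, hkφ⟩ : Fin _)]
  · rw [if_pos rfl, zpow_one]
  · intro j _ hne
    rw [if_neg, zpow_zero]
    intro hval
    exact hne (Fin.ext hval)
  · intro h; exact absurd (Finset.mem_univ _) h

lemma term2 (hℓ : ℓ.Prime) (z : Fin ((ℓ^(n+1)).totient) → ℂ) {r : ℕ} (hr : r < ℓ^n) :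
    ∏ j : Fin ((ℓ^(n+1)).totient), z j ^ (cExp (ℓ^(n+1)) (j : ℕ) (ℓ^n * (ℓ-1) + r)) =
      (∏ i ∈ Finset.range (ℓ-1), zfun z (ℓ^n * i + r))⁻¹ := by
  have hφ := totient_eq n hℓ
  have hjlt : ∀ j : Fin ((ℓ^(n+1)).totient), (j : ℕ) < ℓ^n * (ℓ-1) := by
    intro j; rw [← hφ]; exact j.isLt
  rw [Finset.prod_congr rfl (fun j _ => by rw [c2 n hℓ hr (hjlt j)])]
  have step1 : ∀ j : Fin ((ℓ^(n+1)).totient),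
      z j ^ (if (j:ℕ) % ℓ^n = r then (-1 : ℤ) else 0) =
      (if (j:ℕ) % ℓ^n = r then (z j)⁻¹ else 1) := by
    intro j
    split_ifs
    · exact zpow_neg_one (z j)
    · exact zpow_zero (z j)
  rw [Finset.prod_congr rfl (fun j _ => step1 j), ← Finset.prod_filter,
    Finset.prod_inv_distrib]
  congr 1
  refine Finset.prod_bij' (fun (j : Fin ((ℓ^(n+1)).totient))
      (hj : j ∈ Finset.univ.filter (fun a => Fin.val a % ℓ^n = r)) => (j : ℕ) / ℓ^n)
    (fun (i : ℕ) (hi : i ∈ Finset.range (ℓ-1)) =>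
      (⟨ℓ^n * i + r, by
        rw [hφ]
        have : i + 1 ≤ ℓ - 1 := Finset.mem_range.1 hi
        calc ℓ^n * i + r < ℓ^n * i + ℓ^n := by omega
        _ = ℓ^n * (i+1) := by ring
        _ ≤ ℓ^n * (ℓ-1) := Nat.mul_le_mul_left _ this⟩ : Fin _))
    ?_ ?_ ?_ ?_ ?_
  · intro j hj
    rw [Finset.mem_filter] at hj
    apply Finset.mem_range.2
    have hq : 0 < ℓ^n := Nat.pow_pos hℓ.pos
    have hdm : ℓ^n * ((j:ℕ) / ℓ^n) + r = (j:ℕ) := by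
      rw [← hj.2]; exact Nat.div_add_mod _ _
    have := hjlt j
    by_contra hcon
    push_neg at hcon
    have : ℓ^n * (ℓ-1) ≤ ℓ^n * ((j:ℕ) / ℓ^n) := Nat.mul_le_mul_left _ hcon
    omega
  · intro i hi
    rw [Finset.mem_filter]
    refine ⟨Finset.mem_univ _, ?_⟩
    show (ℓ^n * i + r) % ℓ^n = r
    rw [Nat.mul_add_mod, Nat.mod_eq_of_lt hr]
  · intro j hj
    rw [Finset.mem_filter] at hj
    apply Fin.ext
    show ℓ^n * ((j:ℕ) / ℓ^n) + r = (j:ℕ)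
    rw [← hj.2]; exact Nat.div_add_mod _ _
  · intro i hi
    show (ℓ^n * i + r) / ℓ^n = i
    rw [Nat.mul_add_div (Nat.pow_pos hℓ.pos), Nat.div_eq_of_lt hr, add_zero]
  · intro j hj
    rw [zfun]
    rw [Finset.mem_filter] at hj
    have hdm : ℓ^n * ((j:ℕ) / ℓ^n) + r = (j:ℕ) := by
      rw [← hj.2]; exact Nat.div_add_mod _ _
    rw [dif_pos (by rw [hdm]; exact j.isLt)]
    congr 1
    apply Fin.ext
    show Fin.val j = ℓ ^ n * (Fin.val j / ℓ ^ n) + r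
    exact hdm.symm
end

section
variable {ℓ : ℕ} (n : ℕ)

lemma sum_regroup (hℓ : ℓ.Prime) (z : Fin ((ℓ^(n+1)).totient) → ℂ) :
    ∑ j : Fin ((ℓ^(n+1)).totient), z j =
      ∑ r ∈ Finset.range (ℓ^n), ∑ i ∈ Finset.range (ℓ-1), zfun z (ℓ^n * i + r) := by
  have hφ := totient_eq n hℓ
  have hq : 0 < ℓ^n := Nat.pow_pos hℓ.pos
  rw [← Finset.sum_product']
  refine Finset.sum_bij' (fun (j : Fin ((ℓ^(n+1)).totient)) (_ : j ∈ Finset.univ) =>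
      ((Fin.val j % ℓ^n, Fin.val j / ℓ^n) : ℕ × ℕ))
    (fun (p : ℕ × ℕ) (hp : p ∈ Finset.range (ℓ^n) ×ˢ Finset.range (ℓ-1)) =>
      (⟨ℓ^n * p.2 + p.1, by
        rw [hφ]
        rw [Finset.mem_product, Finset.mem_range, Finset.mem_range] at hp
        calc ℓ^n * p.2 + p.1 < ℓ^n * p.2 + ℓ^n := by omega
        _ = ℓ^n * (p.2+1) := by ring
        _ ≤ ℓ^n * (ℓ-1) := Nat.mul_le_mul_left _ hp.2⟩ : Fin _))
    ?_ ?_ ?_ ?_ ?_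
  · intro j _
    rw [Finset.mem_product, Finset.mem_range, Finset.mem_range]
    constructor
    · exact Nat.mod_lt _ hq
    · have hjlt : Fin.val j < ℓ^n * (ℓ-1) := by rw [← hφ]; exact j.isLt
      by_contra hcon
      push_neg at hcon
      have h3 : ℓ^n * (ℓ-1) ≤ ℓ^n * (Fin.val j / ℓ^n) := Nat.mul_le_mul_left _ hcon
      have h4 : ℓ^n * (Fin.val j / ℓ^n) ≤ Fin.val j := Nat.mul_div_le _ _
      omega
  · intro p hp
    exact Finset.mem_univ _
  · intro j _
    apply Fin.ext
    show ℓ^n * (Fin.val j / ℓ^n) + Fin.val j % ℓ^n = Fin.val j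
    exact Nat.div_add_mod _ _
  · intro p hp
    rw [Finset.mem_product, Finset.mem_range, Finset.mem_range] at hp
    show ((ℓ^n * p.2 + p.1) % ℓ^n, (ℓ^n * p.2 + p.1) / ℓ^n) = p
    rw [Nat.mul_add_mod, Nat.mod_eq_of_lt hp.1,
      Nat.mul_add_div hq, Nat.div_eq_of_lt hp.1, add_zero]
  · intro j _
    rw [zfun]
    have hdm : ℓ^n * (Fin.val j / ℓ^n) + Fin.val j % ℓ^n = Fin.val j := Nat.div_add_mod _ _
    rw [dif_pos (by rw [hdm]; exact j.isLt)]
    congr 1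
    apply Fin.ext
    show Fin.val j = ℓ^n * (Fin.val j / ℓ^n) + Fin.val j % ℓ^n
    exact hdm.symm

lemma gphi_formula (hℓ : ℓ.Prime) (z : Fin ((ℓ^(n+1)).totient) → ℂ) :
    gphi (ℓ^(n+1)) z = ∑ r ∈ Finset.range (ℓ^n),
      ((∑ i ∈ Finset.range (ℓ-1), zfun z (ℓ^n * i + r)) +
        (∏ i ∈ Finset.range (ℓ-1), zfun z (ℓ^n * i + r))⁻¹) := by
  have h2 := hℓ.two_le
  have hq : 0 < ℓ^n := Nat.pow_pos hℓ.pos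
  have hφ := totient_eq n hℓ
  set N := ℓ^n * (ℓ-1) with hN
  have hNq : N + ℓ^n = ℓ^(n+1) := by
    rw [hN]
    have h3 : ℓ^n * (ℓ-1) + ℓ^n = ℓ^n * ((ℓ-1)+1) := by ring
    rw [h3, Nat.sub_add_cancel (by omega), ← pow_succ]
  have hN1 : 1 ≤ N := Nat.mul_pos hq (by omega)
  have hNd : N ≤ ℓ^(n+1) := by omega
  set P : ℕ → ℂ := fun k => ∏ j : Fin (Nat.totient (ℓ^(n+1))), z j ^ (cExp (ℓ^(n+1)) (j : ℕ) k)
    with hP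
  have hunfold : gphi (ℓ^(n+1)) z = ∑ k ∈ Finset.Icc 1 (ℓ^(n+1)), P k := rfl
  rw [hunfold, ← Finset.Ico_add_one_right_eq_Icc]
  rw [← Finset.sum_Ico_consecutive P hN1 (by omega : N ≤ ℓ^(n+1) + 1)]
  rw [← Finset.sum_Ico_consecutive P hNd (by omega : ℓ^(n+1) ≤ ℓ^(n+1) + 1)]
  have hsing : ∑ k ∈ Finset.Ico (ℓ^(n+1)) (ℓ^(n+1)+1), P k = P (ℓ^(n+1)) := by
    rw [Nat.Ico_succ_singleton, Finset.sum_singleton]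
  have hPd : P (ℓ^(n+1)) = zfun z 0 := term3 n hℓ z
  have hfirst : ∑ k ∈ Finset.Ico 1 N, P k = ∑ k ∈ Finset.Ico 1 N, zfun z k := by
    apply Finset.sum_congr rfl
    intro k hk
    rw [Finset.mem_Ico] at hk
    exact term1 n hℓ z hk.2
  have hmid : ∑ k ∈ Finset.Ico N (ℓ^(n+1)), P k =
      ∑ r ∈ Finset.range (ℓ^n), (∏ i ∈ Finset.range (ℓ-1), zfun z (ℓ^n * i + r))⁻¹ := by
    rw [Finset.sum_Ico_eq_sum_range]
    have hdN : ℓ^(n+1) - N = ℓ^n := by omega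
    rw [hdN]
    apply Finset.sum_congr rfl
    intro r hr
    exact term2 n hℓ z (Finset.mem_range.1 hr)
  rw [hsing, hPd, hfirst, hmid]
  have htot : ∑ k ∈ Finset.Ico 1 N, zfun z k + zfun z 0 =
      ∑ j : Fin (Nat.totient (ℓ^(n+1))), z j := by
    have hr1 : ∑ k ∈ Finset.range N, zfun z k = ∑ j : Fin (Nat.totient (ℓ^(n+1))), z j := by
      rw [← hφ]
      rw [← Fin.sum_univ_eq_sum_range (fun k => zfun z k) (Nat.totient (ℓ^(n+1)))]
      apply Finset.sum_congr rfl
      intro j _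
      exact dif_pos j.isLt
    rw [← hr1, Finset.range_eq_Ico,
      ← Finset.sum_Ico_consecutive (fun k => zfun z k) (by omega : 0 ≤ 1) hN1]
    have h0 : ∑ k ∈ Finset.Ico 0 1, zfun z k = zfun z 0 := by
      rw [← Finset.range_eq_Ico, Finset.sum_range_one]
    rw [h0]
    ring
  rw [Finset.sum_add_distrib, ← sum_regroup n hℓ z, ← htot]
  ring
end

/-- For an odd prime `ℓ` and a positive integer `b`, the image of
`g_{ℓ^b}` on the torus equals the `ℓ^{b-1}`-fold Minkowski sum of `H_ℓ` with itself. -/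
theorem stmt3 (ℓ : ℕ) (hℓ : ℓ.Prime) (hodd : Odd ℓ) (b : ℕ) (hb : 0 < b) :
    gImage (ℓ ^ b) = minkSumPow (H ℓ) (ℓ ^ (b - 1)) := by
  obtain ⟨n, rfl⟩ : ∃ n, b = n + 1 := ⟨b-1, (Nat.succ_pred_eq_of_pos hb).symm⟩
  have h2 := hℓ.two_le
  have hq : 0 < ℓ^n := Nat.pow_pos hℓ.pos
  have hφ := totient_eq n hℓ
  have hsimp : (n + 1) - 1 = n := rfl
  have hlt : ∀ {i r : ℕ}, i < ℓ-1 → r < ℓ^n → ℓ^n * i + r < (ℓ^(n+1)).totient := by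
    intro i r hi hr
    rw [hφ]
    calc ℓ^n * i + r < ℓ^n * i + ℓ^n := by omega
    _ = ℓ^n * (i+1) := by ring
    _ ≤ ℓ^n * (ℓ-1) := Nat.mul_le_mul_left _ hi
  ext w
  simp only [gImage, Set.mem_setOf_eq, minkSumPow, Nat.add_sub_cancel]
  constructor
  · rintro ⟨z, hz, rfl⟩
    refine ⟨fun r => (∑ i ∈ Finset.range (ℓ-1), zfun z (ℓ^n * i + (r:ℕ))) +
      (∏ i ∈ Finset.range (ℓ-1), zfun z (ℓ^n * i + (r:ℕ)))⁻¹, ?_, ?_⟩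
    · intro r
      rw [mem_H_char h2]
      refine ⟨fun i => zfun z (ℓ^n * (i:ℕ) + (r:ℕ)), ?_, ?_⟩
      · intro i
        have hlt' := hlt i.isLt r.isLt
        show ‖zfun z (ℓ^n * (i:ℕ) + (r:ℕ))‖ = 1
        rw [show zfun z (ℓ^n * (i:ℕ) + (r:ℕ)) = z ⟨_, hlt'⟩ from dif_pos hlt']
        exact hz _
      · rw [Fin.sum_univ_eq_sum_range (fun i => zfun z (ℓ^n * i + (r:ℕ))) (ℓ-1),
           Fin.prod_univ_eq_prod_range (fun i => zfun z (ℓ^n * i + (r:ℕ))) (ℓ-1)]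
    · rw [gphi_formula n hℓ z]
      exact Fin.sum_univ_eq_sum_range (fun r => (∑ i ∈ Finset.range (ℓ-1),
        zfun z (ℓ^n * i + r)) + (∏ i ∈ Finset.range (ℓ-1), zfun z (ℓ^n * i + r))⁻¹) (ℓ^n)
  · rintro ⟨f, hf, rfl⟩
    have hfc := fun r => (mem_H_char h2 (f r)).1 (hf r)
    choose wv hwn hws using hfc
    have hdivlt : ∀ j : Fin ((ℓ^(n+1)).totient), (j:ℕ) / ℓ^n < ℓ - 1 := by
      intro j
      have hjlt : (j:ℕ) < ℓ^n * (ℓ-1) := by rw [← hφ]; exact j.isLt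
      by_contra hcon
      push_neg at hcon
      have h3 : ℓ^n * (ℓ-1) ≤ ℓ^n * ((j:ℕ) / ℓ^n) := Nat.mul_le_mul_left _ hcon
      have h4 : ℓ^n * ((j:ℕ) / ℓ^n) ≤ (j:ℕ) := Nat.mul_div_le _ _
      omega
    set z : Fin ((ℓ^(n+1)).totient) → ℂ := fun j =>
      wv ⟨(j:ℕ) % ℓ^n, Nat.mod_lt _ hq⟩ ⟨(j:ℕ) / ℓ^n, hdivlt j⟩ with hzdef
    have hkey : ∀ (r : Fin (ℓ^n)) (i : Fin (ℓ-1)),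
        zfun z (ℓ^n * (i:ℕ) + (r:ℕ)) = wv r i := by
      intro r i
      have hlt' := hlt i.isLt r.isLt
      have e1 : (ℓ^n * (i:ℕ) + (r:ℕ)) % ℓ^n = (r:ℕ) := by
        rw [Nat.mul_add_mod, Nat.mod_eq_of_lt r.isLt]
      have e2 : (ℓ^n * (i:ℕ) + (r:ℕ)) / ℓ^n = (i:ℕ) := by
        rw [Nat.mul_add_div hq, Nat.div_eq_of_lt r.isLt, add_zero]
      rw [show zfun z (ℓ^n * (i:ℕ) + (r:ℕ)) = z ⟨_, hlt'⟩ from dif_pos hlt', hzdef]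
      show wv ⟨((⟨ℓ^n * (i:ℕ) + (r:ℕ), hlt'⟩ : Fin ((ℓ^(n+1)).totient)) : ℕ) % ℓ^n,
            Nat.mod_lt _ hq⟩
          ⟨((⟨ℓ^n * (i:ℕ) + (r:ℕ), hlt'⟩ : Fin ((ℓ^(n+1)).totient)) : ℕ) / ℓ^n,
            hdivlt ⟨ℓ^n * (i:ℕ) + (r:ℕ), hlt'⟩⟩ = wv r i
      congr 1
      · exact Fin.ext e1
      · exact Fin.ext e2
    refine ⟨z, ?_, ?_⟩
    · intro j
      exact hwn _ _
    · rw [gphi_formula n hℓ z,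
        ← Fin.sum_univ_eq_sum_range (fun r => (∑ i ∈ Finset.range (ℓ-1),
            zfun z (ℓ^n * i + r)) + (∏ i ∈ Finset.range (ℓ-1), zfun z (ℓ^n * i + r))⁻¹) (ℓ^n)]
      apply Finset.sum_congr rfl
      intro r _
      rw [← Fin.sum_univ_eq_sum_range (fun i => zfun z (ℓ^n * i + (r:ℕ))) (ℓ-1),
        ← Fin.prod_univ_eq_prod_range (fun i => zfun z (ℓ^n * i + (r:ℕ))) (ℓ-1)]
      rw [Finset.sum_congr rfl (fun i _ => hkey r i),
        Finset.prod_congr rfl (fun i _ => hkey r i)]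
      exact hws r
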